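/- Let z ∈ ℝ² and let L₁ and L₂ be two distinct lines through z. Let A₁, A₂, A₃, A₄ : ℝ² → ℝ² be affine maps such that A₁ = A₂ on L₁, A₂ = A₃ on L₂, A₃ = A₄ on L₁, and A₄ = A₁ on L₂. Then div A₁ − div A₂ + div A₃ − div A₄ = 0. (This is the interior singular-vertex relation: if a continuous piecewise affine vector field on four triangles surrounding z, whose edges at z all lie on the two lines L₁ and L₂, is given by Aᵢ on the i-th triangle in cyclic order, then the alternating sum of the divergences of v around z vanishes.) -/

import Mathlib

/-- **interior singular-vertex relation.** Let `L₁, L₂` be two distinct lines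
through `z`, given by linearly independent direction vectors `d₁, d₂`.  If the affine maps
`A₁, A₂, A₃, A₄ : ℝ² → ℝ²` satisfy `A₁ = A₂` on `L₁`, `A₂ = A₃` on `L₂`, `A₃ = A₄` on `L₁`
and `A₄ = A₁` on `L₂`, then the alternating sum of their divergences vanishes:
`div A₁ - div A₂ + div A₃ - div A₄ = 0`. -/
theorem interior_singular_vertex_relation
    (z d₁ d₂ : EuclideanSpace ℝ (Fin 2))
    (hd : LinearIndependent ℝ ![d₁, d₂])
    (A₁ A₂ A₃ A₄ : EuclideanSpace ℝ (Fin 2) →ᵃ[ℝ] EuclideanSpace ℝ (Fin 2))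
    (h12 : ∀ t : ℝ, A₁ (z + t • d₁) = A₂ (z + t • d₁))
    (h23 : ∀ t : ℝ, A₂ (z + t • d₂) = A₃ (z + t • d₂))
    (h34 : ∀ t : ℝ, A₃ (z + t • d₁) = A₄ (z + t • d₁))
    (h41 : ∀ t : ℝ, A₄ (z + t • d₂) = A₁ (z + t • d₂)) :
    LinearMap.trace ℝ (EuclideanSpace ℝ (Fin 2)) A₁.linear
      - LinearMap.trace ℝ (EuclideanSpace ℝ (Fin 2)) A₂.linear
      + LinearMap.trace ℝ (EuclideanSpace ℝ (Fin 2)) A₃.linear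
      - LinearMap.trace ℝ (EuclideanSpace ℝ (Fin 2)) A₄.linear = 0 := by
  -- From the agreement on lines, the linear parts agree on the direction vectors.
  have key : ∀ (A B : EuclideanSpace ℝ (Fin 2) →ᵃ[ℝ] EuclideanSpace ℝ (Fin 2))
      (d : EuclideanSpace ℝ (Fin 2)),
      (∀ t : ℝ, A (z + t • d) = B (z + t • d)) → A.linear d = B.linear d := by
    intro A B d h
    have h0 := h 0
    have h1 := h 1
    have hA : A (z + (1:ℝ) • d) = A.linear d + A z := by
      rw [one_smul]
      have := A.map_vadd z d
      simpa [vadd_eq_add, add_comm] using this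
    have hB : B (z + (1:ℝ) • d) = B.linear d + B z := by
      rw [one_smul]
      have := B.map_vadd z d
      simpa [vadd_eq_add, add_comm] using this
    have h0' : A z = B z := by simpa using h0
    rw [hA, hB, h0'] at h1
    exact add_right_cancel h1
  have e1 : A₁.linear d₁ = A₂.linear d₁ := key _ _ _ h12
  have e2 : A₂.linear d₂ = A₃.linear d₂ := key _ _ _ h23
  have e3 : A₃.linear d₁ = A₄.linear d₁ := key _ _ _ h34
  have e4 : A₄.linear d₂ = A₁.linear d₂ := key _ _ _ h41
  set B := A₁.linear - A₂.linear + A₃.linear - A₄.linear with hB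
  have hBd₁ : B d₁ = 0 := by
    simp only [hB, LinearMap.sub_apply, LinearMap.add_apply]
    rw [e1, e3]; abel
  have hBd₂ : B d₂ = 0 := by
    simp only [hB, LinearMap.sub_apply, LinearMap.add_apply]
    rw [e2, ← e4]; abel
  have hcard : Fintype.card (Fin 2) = Module.finrank ℝ (EuclideanSpace ℝ (Fin 2)) := by
    simp
  let b : Module.Basis (Fin 2) ℝ (EuclideanSpace ℝ (Fin 2)) :=
    basisOfLinearIndependentOfCardEqFinrank hd hcard
  have hb : ∀ i, b i = ![d₁, d₂] i := fun i => by
    simp [b, coe_basisOfLinearIndependentOfCardEqFinrank]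
  have hB0 : B = 0 := by
    apply b.ext
    intro i
    rw [hb i]
    fin_cases i
    · simpa using hBd₁
    · simpa using hBd₂
  have := congrArg (LinearMap.trace ℝ (EuclideanSpace ℝ (Fin 2))) hB0
  simpa [hB, map_sub, map_add] using this
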